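/- For every vector w in R^n and x drawn uniformly from {-1,1}^n, and every even positive integer k, the k-th moment of |<w,x>| satisfies E[|<w,x>|^k] ≤ k^{k/2} · (E[|<w,x>|^2])^{k/2} = k^{k/2} · ||w||^k. -/

import Mathlib

open Finset

/-- The ±1 value of a boolean bit. -/
def signBit (b : Bool) : ℝ := if b then 1 else -1

lemma sum_signBit_pow (e : ℕ) :
    ∑ b : Bool, signBit b ^ e = if Even e then 2 else 0 := by
  rcases Nat.even_or_odd e with h | h
  · simp [Fintype.sum_bool, signBit, h, h.neg_one_pow]
  · simp [Fintype.sum_bool, signBit, h.neg_one_pow, Nat.not_even_iff_odd.mpr h]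

lemma moment_formula (n e : ℕ) (w : Fin n → ℝ) :
    ∑ x : Fin n → Bool, (∑ i, w i * signBit (x i)) ^ e
      = 2 ^ n * ∑ μ ∈ (piAntidiag (univ : Finset (Fin n)) e).filter fun μ => ∀ i, Even (μ i),
          (Nat.multinomial univ μ : ℝ) * ∏ i, w i ^ μ i := by
  have expand : ∀ x : Fin n → Bool, (∑ i, w i * signBit (x i)) ^ e
      = ∑ μ ∈ piAntidiag (univ : Finset (Fin n)) e,
          ((Nat.multinomial univ μ : ℝ) * ∏ i, w i ^ μ i) * ∏ i, signBit (x i) ^ μ i := by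
    intro x
    rw [Finset.sum_pow_eq_sum_piAntidiag]
    refine Finset.sum_congr rfl fun μ _ => ?_
    simp [mul_pow, Finset.prod_mul_distrib, mul_assoc]
  have inner : ∀ μ : Fin n → ℕ,
      ∑ x : Fin n → Bool, ∏ i, signBit (x i) ^ μ i
        = if (∀ i, Even (μ i)) then (2:ℝ)^n else 0 := by
    intro μ
    rw [← Fintype.prod_sum (f := fun (i : Fin n) (b : Bool) => signBit b ^ μ i)]
    by_cases h : ∀ i, Even (μ i)
    · rw [if_pos h]
      calc ∏ i, ∑ b : Bool, signBit b ^ μ i = ∏ _i : Fin n, (2:ℝ) := by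
            refine Finset.prod_congr rfl fun i _ => ?_
            rw [sum_signBit_pow, if_pos (h i)]
        _ = 2 ^ n := by simp
    · rw [if_neg h]
      push_neg at h
      obtain ⟨i, hi⟩ := h
      refine Finset.prod_eq_zero (mem_univ i) ?_
      rw [sum_signBit_pow, if_neg hi]
  calc ∑ x : Fin n → Bool, (∑ i, w i * signBit (x i)) ^ e
      = ∑ x : Fin n → Bool, ∑ μ ∈ piAntidiag (univ : Finset (Fin n)) e,
          ((Nat.multinomial univ μ : ℝ) * ∏ i, w i ^ μ i) * ∏ i, signBit (x i) ^ μ i := by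
        exact Finset.sum_congr rfl fun x _ => expand x
    _ = ∑ μ ∈ piAntidiag (univ : Finset (Fin n)) e,
          ∑ x : Fin n → Bool,
          ((Nat.multinomial univ μ : ℝ) * ∏ i, w i ^ μ i) * ∏ i, signBit (x i) ^ μ i :=
        Finset.sum_comm
    _ = ∑ μ ∈ piAntidiag (univ : Finset (Fin n)) e,
          if (∀ i, Even (μ i)) then
            (2:ℝ)^n * ((Nat.multinomial univ μ : ℝ) * ∏ i, w i ^ μ i) else 0 := by
        refine Finset.sum_congr rfl fun μ _ => ?_
        rw [← Finset.mul_sum, inner μ]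
        split_ifs <;> ring
    _ = ∑ μ ∈ (piAntidiag (univ : Finset (Fin n)) e).filter fun μ => ∀ i, Even (μ i),
          (2:ℝ)^n * ((Nat.multinomial univ μ : ℝ) * ∏ i, w i ^ μ i) :=
        (Finset.sum_filter _ _).symm
    _ = _ := by rw [← Finset.mul_sum]

lemma even_moment (n m : ℕ) (w : Fin n → ℝ) :
    ∑ x : Fin n → Bool, (∑ i, w i * signBit (x i)) ^ (2 * m)
      = 2 ^ n * ∑ ν ∈ piAntidiag (univ : Finset (Fin n)) m,
          (Nat.multinomial univ (fun i => 2 * ν i) : ℝ) * ∏ i, w i ^ (2 * ν i) := by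
  rw [moment_formula]
  congr 1
  refine Finset.sum_nbij' (i := fun μ l => μ l / 2) (j := fun ν l => 2 * ν l)
    ?_ ?_ ?_ ?_ ?_
  · intro μ hμ
    simp only [mem_filter, mem_piAntidiag] at hμ
    obtain ⟨⟨hsum, -⟩, heven⟩ := hμ
    have hpt : ∀ l, 2 * (μ l / 2) = μ l := fun l =>
      Nat.mul_div_cancel' (even_iff_two_dvd.mp (heven l))
    simp only [mem_piAntidiag]
    refine ⟨?_, fun _ _ => mem_univ _⟩
    have h2 : 2 * ∑ l, μ l / 2 = 2 * m := by
      rw [Finset.mul_sum]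
      rw [Finset.sum_congr rfl fun l _ => hpt l, hsum]
    omega
  · intro ν hν
    simp only [mem_piAntidiag] at hν
    simp only [mem_filter, mem_piAntidiag]
    refine ⟨⟨?_, fun _ _ => mem_univ _⟩, fun l => even_two_mul (ν l)⟩
    rw [← Finset.mul_sum, hν.1]
  · intro μ hμ
    simp only [mem_filter, mem_piAntidiag] at hμ
    exact funext fun l => Nat.mul_div_cancel' (even_iff_two_dvd.mp (hμ.2 l))
  · intro ν _
    funext l
    show 2 * ν l / 2 = ν l
    omega
  · intro μ hμ
    simp only [mem_filter, mem_piAntidiag] at hμ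
    have hpt : ∀ l, 2 * (μ l / 2) = μ l := fun l =>
      Nat.mul_div_cancel' (even_iff_two_dvd.mp (hμ.2 l))
    simp only [hpt]

lemma piAntidiag_one_sum (n : ℕ) (g : (Fin n → ℕ) → ℝ) :
    ∑ ν ∈ piAntidiag (univ : Finset (Fin n)) 1, g ν = ∑ i, g (Pi.single i 1) := by
  have himage : piAntidiag (univ : Finset (Fin n)) 1
      = univ.image (fun i => Pi.single i 1) := by
    ext f
    simp only [mem_piAntidiag, mem_image, mem_univ, true_and]
    constructor
    · rintro ⟨hsum, -⟩
      obtain ⟨i, hi⟩ : ∃ i, f i ≠ 0 := by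
        by_contra h'; push_neg at h'; simp [h'] at hsum
      have h1 : f i ≤ 1 := hsum ▸ Finset.single_le_sum (fun _ _ => Nat.zero_le _) (mem_univ i)
      have hfi : f i = 1 := le_antisymm h1 (Nat.one_le_iff_ne_zero.2 hi)
      refine ⟨i, funext fun j => ?_⟩
      rcases eq_or_ne j i with rfl | hj
      · simp [hfi]
      · have hz : ∑ l ∈ univ.erase i, f l = 0 := by
          have h' : f i + ∑ l ∈ univ.erase i, f l = 1 := by
            rw [Finset.add_sum_erase univ f (mem_univ i), hsum]
          omega
        have hj0 : f j = 0 := Finset.sum_eq_zero_iff.1 hz j (by simp [hj])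
        simp [hj0, Pi.single_eq_of_ne hj]
    · rintro ⟨i, rfl⟩
      exact ⟨by simp, fun _ _ => trivial⟩
  rw [himage, Finset.sum_image]
  intro i _ j _ h
  by_contra hij
  have := congr_fun h i
  beta_reduce at this
  rw [Pi.single_eq_same, Pi.single_eq_of_ne hij] at this
  exact one_ne_zero this

theorem stmt_0 (n k : ℕ) (hk : 0 < k) (hke : Even k) (w : Fin n → ℝ) :
    ((∑ x : Fin n → Bool, |∑ i, w i * signBit (x i)| ^ k) / 2 ^ n
      ≤ (k : ℝ) ^ (k / 2) *
        ((∑ x : Fin n → Bool, (∑ i, w i * signBit (x i)) ^ 2) / 2 ^ n) ^ (k / 2))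
    ∧ (k : ℝ) ^ (k / 2) *
        ((∑ x : Fin n → Bool, (∑ i, w i * signBit (x i)) ^ 2) / 2 ^ n) ^ (k / 2)
      = (k : ℝ) ^ (k / 2) * Real.sqrt (∑ i, w i ^ 2) ^ k := by
  obtain ⟨m, rfl⟩ := hke
  have hmm : m + m = 2 * m := (two_mul m).symm
  have hdiv : (m + m) / 2 = m := by omega
  have h2n : ((2:ℝ) ^ n) ≠ 0 := by positivity
  have hE2 : (∑ x : Fin n → Bool, (∑ i, w i * signBit (x i)) ^ 2) / 2 ^ n
      = ∑ i, w i ^ 2 := by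
    have h := even_moment n 1 w
    rw [mul_one] at h
    rw [h, mul_comm, mul_div_assoc, div_self h2n, mul_one, piAntidiag_one_sum]
    refine Finset.sum_congr rfl fun i _ => ?_
    have hfun : (fun j => 2 * (Pi.single i 1 : Fin n → ℕ) j) = Pi.single i 2 := by
      funext j
      rcases eq_or_ne j i with rfl | hj
      · simp
      · simp [Pi.single_eq_of_ne hj]
    have hmult : Nat.multinomial univ (Pi.single i (2:ℕ)) = 1 := by
      have hspec := Nat.multinomial_spec (univ : Finset (Fin n)) (Pi.single i (2:ℕ))
      have hprod : ∏ j, Nat.factorial ((Pi.single i 2 : Fin n → ℕ) j) = 2 := by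
        rw [Finset.prod_eq_single_of_mem
          (f := fun j => Nat.factorial ((Pi.single i 2 : Fin n → ℕ) j)) i (mem_univ i)
          (fun j _ hj => by simp [Pi.single_eq_of_ne hj])]
        simp [Nat.factorial]
      have hsum : ∑ j, Pi.single i (2:ℕ) j = 2 := by simp
      rw [hprod, hsum] at hspec
      simp [Nat.factorial] at hspec
      omega
    have hpow : ∏ j, w j ^ (2 * Pi.single i 1 j) = w i ^ 2 := by
      rw [Finset.prod_eq_single_of_mem i (mem_univ i)
        (fun j _ hj => by simp [Pi.single_eq_of_ne hj])]
      simp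
    rw [hpow, hfun, hmult]
    simp
  constructor
  · have habs : ∀ x : Fin n → Bool,
        |∑ i, w i * signBit (x i)| ^ (m + m) = (∑ i, w i * signBit (x i)) ^ (m + m) :=
      fun x => Even.pow_abs ⟨m, rfl⟩ _
    simp_rw [habs]
    rw [hE2, hdiv, hmm, even_moment n m w, mul_comm ((2:ℝ)^n), mul_div_assoc,
      div_self h2n, mul_one,
      Finset.sum_pow_eq_sum_piAntidiag (univ : Finset (Fin n)) (fun i => w i ^ 2) m,
      Finset.mul_sum]
    refine Finset.sum_le_sum fun ν hν => ?_
    have hsum : ∑ i, ν i = m := ((mem_piAntidiag).1 hν).1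
    have hprod_eq : ∏ i, w i ^ (2 * ν i) = ∏ i, (w i ^ 2) ^ ν i :=
      Finset.prod_congr rfl fun i _ => by rw [pow_mul]
    rw [hprod_eq]
    have hnonneg : (0:ℝ) ≤ ∏ i, (w i ^ 2) ^ ν i :=
      Finset.prod_nonneg fun i _ => pow_nonneg (sq_nonneg _) _
    have hb : Nat.multinomial univ (fun i => 2 * ν i)
        ≤ (2 * m) ^ m * Nat.multinomial univ ν := by
      calc Nat.multinomial univ (fun i => 2 * ν i)
            ≤ (∑ i, ν i) ^ (∑ i, ν i) * Nat.multinomial univ ν :=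
            Nat.multinomial_two_mul_le_mul_multinomial
        _ ≤ (2 * m) ^ m * Nat.multinomial univ ν := by
            rw [hsum]
            exact Nat.mul_le_mul_right _ (Nat.pow_le_pow_left (by omega) m)
    calc (Nat.multinomial univ (fun i => 2 * ν i) : ℝ) * ∏ i, (w i ^ 2) ^ ν i
        ≤ (((2 * m) ^ m * Nat.multinomial univ ν : ℕ) : ℝ) * ∏ i, (w i ^ 2) ^ ν i := by
          exact mul_le_mul_of_nonneg_right (by exact_mod_cast hb) hnonneg
      _ = (↑(2 * m) : ℝ) ^ m * ((Nat.multinomial univ ν : ℝ) * ∏ i, (w i ^ 2) ^ ν i) := by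
          push_cast
          try ring
  · rw [hE2, hdiv]
    congr 1
    rw [hmm, pow_mul, Real.sq_sqrt (Finset.sum_nonneg fun i _ => sq_nonneg _)]
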